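/- Let X be a compact Hausdorff space and let F be a linear subspace of C(X) containing the constant function 1. Let U ⊆ ℝ be a nonempty open interval and let φ : U → ℝ be continuous and not affine (there are no a, b ∈ ℝ with φ(t) = a·t + b for all t ∈ U). Assume that φ ∘ f ∈ F for every f ∈ F with f(X) ⊆ U. Then the sup-norm closure of F is closed under pointwise multiplication and under the pointwise lattice operation ⊔ (it is a subalgebra and a sublattice of C(X)); moreover, if F separates the points of X, then F is dense in C(X). -/

import Mathlib

open MeasureTheory Set Filter Convolution Metric Topology

section Aux
-- aux lemma 1: integral in closed submodule
theorem integral_mem_closedSubmodule {E : Type*} [NormedAddCommGroup E] [NormedSpace ℝ E]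
    [CompleteSpace E] (G : Submodule ℝ E) (hG : IsClosed (G : Set E))
    {v : ℝ → E} (hv : Continuous v) (hsupp : HasCompactSupport v)
    (hmem : ∀ s, v s ∈ G) : ∫ s, v s ∈ G := by
  haveI : CompleteSpace G := hG.completeSpace_coe
  set w : ℝ → G := fun s => ⟨v s, hmem s⟩ with hw
  have hwc : Continuous w := hv.subtype_mk _
  have hws : HasCompactSupport w := by
    have : Function.support w = Function.support v := by
      ext s; simp [hw, Function.mem_support, Subtype.ext_iff]
    simpa [HasCompactSupport, tsupport, this] using hsupp
  have hwi : Integrable w volume := hwc.integrable_of_hasCompactSupport hws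
  have := (G.subtypeL.integral_comp_comm hwi).symm
  have h2 : ∫ s, v s = G.subtypeL (∫ s, w s) := by
    rw [this]; rfl
  rw [h2]
  exact (∫ s, w s).2


-- from ContDiff ⊤ get facts
theorem aux_diff {Ψ : ℝ → ℝ} (h : ContDiff ℝ ((⊤:ℕ∞) : WithTop ℕ∞) Ψ) :
    Differentiable ℝ Ψ ∧ Differentiable ℝ (deriv Ψ) ∧ Continuous (deriv (deriv Ψ)) := by
  have h1 := contDiff_infty_iff_deriv.mp h
  have h2 := contDiff_infty_iff_deriv.mp h1.2
  exact ⟨h1.1, h2.1, h2.2.continuous⟩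

theorem aux_affine {Ψ : ℝ → ℝ} (h : ContDiff ℝ ((⊤:ℕ∞) : WithTop ℕ∞) Ψ) {m M : ℝ}
    (h0 : ∀ t ∈ Icc m M, deriv (deriv Ψ) t = 0) :
    ∀ t ∈ Icc m M, Ψ t = Ψ m + deriv Ψ m * (t - m) := by
  obtain ⟨hd1, hd2, _⟩ := aux_diff h
  have hm : m ∈ Icc m M ∨ M < m := by
    rcases le_or_gt m M with h' | h'
    · exact Or.inl ⟨le_refl m, h'⟩
    · exact Or.inr h'
  intro t ht
  have hmem : m ∈ Icc m M := ⟨le_refl m, le_trans ht.1 ht.2⟩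
  -- deriv Ψ constant on Icc
  have hconst : ∀ s ∈ Icc m M, deriv Ψ s = deriv Ψ m := by
    intro s hs
    have := Convex.norm_image_sub_le_of_norm_deriv_le (f := deriv Ψ) (C := 0)
      (fun x _ => hd2 x) (fun x hx => by rw [h0 x hx]; simp) (convex_Icc m M) hmem hs
    simpa [sub_eq_zero] using this
  -- g := Ψ - deriv Ψ m * id constant on Icc
  have hgder : ∀ x : ℝ, HasDerivAt (fun y => Ψ y - deriv Ψ m * y) (deriv Ψ x - deriv Ψ m) x := by
    intro x
    exact ((hd1 x).hasDerivAt.sub ((hasDerivAt_id x).const_mul (deriv Ψ m))).congr_deriv (by ring)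
  have hg : ∀ x ∈ Icc m M, DifferentiableAt ℝ (fun y => Ψ y - deriv Ψ m * y) x :=
    fun x _ => (hgder x).differentiableAt
  have hgd : ∀ x ∈ Icc m M, deriv (fun y => Ψ y - deriv Ψ m * y) x = 0 := by
    intro x hx
    rw [(hgder x).deriv]
    simp [hconst x hx]
  have := Convex.norm_image_sub_le_of_norm_deriv_le (f := fun y => Ψ y - deriv Ψ m * y) (C := 0)
    hg (fun x hx => by rw [hgd x hx]; simp) (convex_Icc m M) hmem ht
  have h2 : Ψ t - deriv Ψ m * t = Ψ m - deriv Ψ m * m := by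
    simpa [sub_eq_zero] using this
  linarith [h2]

-- Taylor-type bound
theorem aux_taylor {Ψ : ℝ → ℝ} (h : ContDiff ℝ ((⊤:ℕ∞) : WithTop ℕ∞) Ψ) (p : ℝ) {r κ : ℝ} (hκ : 0 ≤ κ)
    (hbd : ∀ τ ∈ Icc (p - r) (p + r),
      |deriv (deriv Ψ) τ - deriv (deriv Ψ) p| ≤ κ) :
    ∀ a : ℝ, |a| ≤ r →
      |Ψ (p + a) - Ψ p - deriv Ψ p * a - deriv (deriv Ψ) p / 2 * a ^ 2| ≤ κ * a ^ 2 := by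
  obtain ⟨hd1, hd2, _⟩ := aux_diff h
  intro a ha
  set c₂ := deriv (deriv Ψ) p with hc₂
  set g : ℝ → ℝ := fun b => Ψ (p + b) - Ψ p - deriv Ψ p * b - c₂ / 2 * b ^ 2 with hgdef
  set g1 : ℝ → ℝ := fun b => deriv Ψ (p + b) - deriv Ψ p - c₂ * b with hg1def
  have hg1' : ∀ b, HasDerivAt g (g1 b) b := by
    intro b
    have h1 : HasDerivAt (fun y : ℝ => Ψ (p + y)) (deriv Ψ (p + b)) b := by
      have hi : HasDerivAt (fun y : ℝ => p + y) 1 b := by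
        simpa using (hasDerivAt_id b).const_add p
      exact ((hd1 (p + b)).hasDerivAt.comp b hi).congr_deriv (mul_one _)
    have h2 : HasDerivAt (fun y : ℝ => deriv Ψ p * y) (deriv Ψ p) b := by
      simpa using (hasDerivAt_id b).const_mul (deriv Ψ p)
    have h3 : HasDerivAt (fun y : ℝ => c₂ / 2 * y ^ 2) (c₂ * b) b := by
      have := (hasDerivAt_pow 2 b).const_mul (c₂ / 2)
      exact this.congr_deriv (by rw [show (2:ℕ) - 1 = 1 from rfl]; push_cast; ring)
    exact ((h1.sub_const (Ψ p)).sub h2).sub h3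
  have hg2' : ∀ b, HasDerivAt g1 (deriv (deriv Ψ) (p + b) - c₂) b := by
    intro b
    have h1 : HasDerivAt (fun y : ℝ => deriv Ψ (p + y)) (deriv (deriv Ψ) (p + b)) b := by
      have hi : HasDerivAt (fun y : ℝ => p + y) 1 b := by
        simpa using (hasDerivAt_id b).const_add p
      exact ((hd2 (p + b)).hasDerivAt.comp b hi).congr_deriv (mul_one _)
    have h2 : HasDerivAt (fun y : ℝ => c₂ * y) c₂ b := by
      simpa using (hasDerivAt_id b).const_mul c₂
    exact (h1.sub_const (deriv Ψ p)).sub h2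
  -- bound |g1 τ| ≤ κ * |a| for τ ∈ Icc (-|a|) |a|
  have hstep1 : ∀ τ ∈ Icc (-|a|) |a|, |g1 τ| ≤ κ * |a| := by
    intro τ hτ
    have h0 : (0:ℝ) ∈ Icc (-|a|) |a| := ⟨neg_nonpos.mpr (abs_nonneg a), abs_nonneg a⟩
    have := Convex.norm_image_sub_le_of_norm_hasDerivWithin_le
      (f := g1) (f' := fun b => deriv (deriv Ψ) (p + b) - c₂) (C := κ)
      (fun x _ => (hg2' x).hasDerivWithinAt)
      (fun x hx => by
        have hx' : p + x ∈ Icc (p - r) (p + r) := by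
          constructor <;> [linarith [hx.1, neg_abs_le a, ha] ; linarith [hx.2, le_abs_self a, ha]]
        simpa [hc₂] using hbd (p + x) hx')
      (convex_Icc _ _) h0 hτ
    have hg10 : g1 0 = 0 := by simp [hg1def]
    rw [hg10] at this
    calc |g1 τ| = ‖g1 τ - 0‖ := by simp
    _ ≤ κ * ‖τ - 0‖ := this
    _ ≤ κ * |a| := by
        have : ‖τ - 0‖ ≤ |a| := by
          simp only [sub_zero, Real.norm_eq_abs]
          exact abs_le.mpr ⟨hτ.1, hτ.2⟩
        exact mul_le_mul_of_nonneg_left this hκ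
  have h0 : (0:ℝ) ∈ Icc (-|a|) |a| := ⟨neg_nonpos.mpr (abs_nonneg a), abs_nonneg a⟩
  have ha' : a ∈ Icc (-|a|) |a| := ⟨neg_abs_le a, le_abs_self a⟩
  have := Convex.norm_image_sub_le_of_norm_hasDerivWithin_le
    (f := g) (f' := g1) (C := κ * |a|)
    (fun x _ => (hg1' x).hasDerivWithinAt)
    (fun x hx => by simpa using hstep1 x hx)
    (convex_Icc _ _) h0 ha'
  have hg0 : g 0 = 0 := by simp [hgdef]
  rw [hg0] at this
  calc |Ψ (p + a) - Ψ p - deriv Ψ p * a - c₂ / 2 * a ^ 2| = ‖g a - 0‖ := by simp [hgdef]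
  _ ≤ κ * |a| * ‖a - 0‖ := this
  _ = κ * (|a| * |a|) := by rw [sub_zero, Real.norm_eq_abs]; ring
  _ = κ * a ^ 2 := by rw [← sq_abs]; ring

end Aux

set_option maxHeartbeats 2000000 in
/-- Let `X` be compact Hausdorff, `F ≤ C(X)` a subspace containing
`1`, `U` a nonempty open interval, and `φ : U → ℝ` continuous and not affine on `U`.
If `φ ∘ f ∈ F` whenever `f ∈ F` has range in `U`, then the sup-norm closure of `F` is
a subalgebra and a sublattice of `C(X)`; moreover if `F` separates points then `F` is
dense. -/
theorem stmt_15 (X : Type*) [TopologicalSpace X] [CompactSpace X] [T2Space X]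
    (F : Submodule ℝ C(X, ℝ)) (hone : (1 : C(X, ℝ)) ∈ F)
    (U : Set ℝ) (hUopen : IsOpen U) (hUconn : U.OrdConnected) (hUne : U.Nonempty)
    (φ : ℝ → ℝ) (hφ : ContinuousOn φ U)
    (hnotaff : ¬∃ a b : ℝ, ∀ t ∈ U, φ t = a * t + b)
    (hcomp : ∀ f ∈ F, (∀ x : X, f x ∈ U) → ∃ h ∈ F, ∀ x : X, h x = φ (f x)) :
    ((∀ f ∈ closure (F : Set C(X, ℝ)), ∀ g ∈ closure (F : Set C(X, ℝ)),
        f * g ∈ closure (F : Set C(X, ℝ))) ∧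
      (∀ f ∈ closure (F : Set C(X, ℝ)), ∀ g ∈ closure (F : Set C(X, ℝ)),
        f ⊔ g ∈ closure (F : Set C(X, ℝ)))) ∧
      ((∀ x y : X, x ≠ y → ∃ f ∈ F, f x ≠ f y) → Dense (F : Set C(X, ℝ))) := by
  classical
  set G := F.topologicalClosure with hGdef
  have hGset : (G : Set C(X, ℝ)) = closure (F : Set C(X, ℝ)) := F.topologicalClosure_coe
  have hGclosed : IsClosed (G : Set C(X, ℝ)) := F.isClosed_topologicalClosure
  -- ## Step 1: three points u < v, w in U witnessing non-affineness
  obtain ⟨u, huU⟩ := hUne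
  obtain ⟨ru, hru, hball⟩ := Metric.isOpen_iff.mp hUopen u huU
  set v : ℝ := u + ru / 2 with hvdef
  have hvU : v ∈ U := hball (by
    rw [mem_ball, Real.dist_eq, hvdef, show u + ru / 2 - u = ru / 2 by ring,
      abs_of_pos (by linarith)]
    linarith)
  have huv : u ≠ v := by rw [hvdef]; intro hcon; nlinarith [hcon]
  set a : ℝ := (φ v - φ u) / (v - u) with hadef
  set b : ℝ := φ u - a * u with hbdef
  have hvu : v - u ≠ 0 := by simp [hvdef]; linarith
  have hφu : φ u = a * u + b := by rw [hbdef]; ring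
  have hφv : φ v = a * v + b := by
    have h1 : a * (v - u) = φ v - φ u := by
      rw [hadef]; field_simp
    rw [hbdef]; nlinarith [h1]
  push_neg at hnotaff
  obtain ⟨w, hwU, hφw⟩ := hnotaff a b
  -- ## Step 2: the interval [m-η, M+η] ⊆ U
  set m : ℝ := min u (min v w) with hmdef
  set M : ℝ := max u (max v w) with hMdef
  have hmU : m ∈ U := by
    rcases min_cases u (min v w) with ⟨h, -⟩ | ⟨h, -⟩
    · rw [hmdef, h]; exact huU
    · rw [hmdef, h]
      rcases min_cases v w with ⟨h', -⟩ | ⟨h', -⟩ <;> rw [h']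
      exacts [hvU, hwU]
  have hMU : M ∈ U := by
    rcases max_cases u (max v w) with ⟨h, -⟩ | ⟨h, -⟩
    · rw [hMdef, h]; exact huU
    · rw [hMdef, h]
      rcases max_cases v w with ⟨h', -⟩ | ⟨h', -⟩ <;> rw [h']
      exacts [hvU, hwU]
  have humM : u ∈ Icc m M := ⟨min_le_left _ _, le_max_left _ _⟩
  have hvmM : v ∈ Icc m M :=
    ⟨le_trans (min_le_right _ _) (min_le_left _ _),
     le_trans (le_max_left _ _) (le_max_right _ _)⟩
  have hwmM : w ∈ Icc m M :=
    ⟨le_trans (min_le_right _ _) (min_le_right _ _),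
     le_trans (le_max_right _ _) (le_max_right _ _)⟩
  have hmM : m ≤ M := le_trans humM.1 humM.2
  obtain ⟨rm, hrm, hballm⟩ := Metric.isOpen_iff.mp hUopen m hmU
  obtain ⟨rM, hrM, hballM⟩ := Metric.isOpen_iff.mp hUopen M hMU
  set η : ℝ := min rm rM / 2 with hηdef
  have hmin : 0 < min rm rM := lt_min hrm hrM
  have hη : 0 < η := by rw [hηdef]; linarith
  have hηmin : η < min rm rM := by rw [hηdef]; linarith
  have hmη : m - η ∈ U := by
    apply hballm
    rw [mem_ball, Real.dist_eq, show m - η - m = -η by ring, abs_neg, abs_of_pos hη]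
    linarith [min_le_left rm rM]
  have hMη : M + η ∈ U := by
    apply hballM
    rw [mem_ball, Real.dist_eq, show M + η - M = η by ring, abs_of_pos hη]
    linarith [min_le_right rm rM]
  have hIccU : Icc (m - η) (M + η) ⊆ U := hUconn.out hmη hMη
  -- ## Step 3: extend φ to ψ continuous on ℝ
  set clamp : ℝ → ℝ := fun t => max (m - η) (min (M + η) t) with hclampdef
  have hclamp_mem : ∀ t, clamp t ∈ Icc (m - η) (M + η) := by
    intro t
    refine ⟨le_max_left _ _, max_le (by linarith) (min_le_left _ _)⟩
  have hclamp_id : ∀ t ∈ Icc (m - η) (M + η), clamp t = t := by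
    intro t ht
    simp only [hclampdef]
    rw [min_eq_right ht.2, max_eq_right ht.1]
  set ψ : ℝ → ℝ := fun t => φ (clamp t) with hψdef
  have hψcont : Continuous ψ := by
    apply hφ.comp_continuous
    · exact continuous_const.max (continuous_const.min continuous_id)
    · exact fun t => hIccU (hclamp_mem t)
  have hψeq : ∀ t ∈ Icc (m - η) (M + η), ψ t = φ t := by
    intro t ht; rw [hψdef]; simp only []; rw [hclamp_id t ht]
  set ψcm : C(ℝ, ℝ) := ⟨ψ, hψcont⟩ with hψcmdef
  -- ## Step 4: bump functions and a good mollification Ψ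
  set ρn : ℕ → ContDiffBump (0 : ℝ) := fun n =>
    ⟨η / (2 * (n + 1)), η / (n + 1), by positivity, by
      rw [div_lt_div_iff₀ (by positivity) (by positivity)]
      nlinarith [hη]⟩ with hρndef
  set Ψn : ℕ → ℝ → ℝ := fun n =>
    (ρn n).normed volume ⋆[ContinuousLinearMap.lsmul ℝ ℝ, volume] ψ with hΨndef
  have hrOut : Tendsto (fun n => (ρn n).rOut) atTop (𝓝 0) := by
    have h1 : Tendsto (fun n : ℕ => η * (1 / (n + 1))) atTop (𝓝 (η * 0)) :=
      tendsto_const_nhds.mul tendsto_one_div_add_atTop_nhds_zero_nat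
    simpa [hρndef, div_eq_mul_inv] using h1
  have hΨnconv : ∀ t : ℝ, Tendsto (fun n => Ψn n t) atTop (𝓝 (ψ t)) := fun t =>
    ContDiffBump.convolution_tendsto_right_of_continuous hrOut hψcont t
  set D : (ℝ → ℝ) → ℝ := fun g => (g w - g u) * (v - u) - (g v - g u) * (w - u) with hDdef
  have hDψ : D ψ ≠ 0 := by
    have h1 : ψ u = φ u := hψeq u ⟨by linarith [humM.1], by linarith [humM.2]⟩
    have h2 : ψ v = φ v := hψeq v ⟨by linarith [hvmM.1], by linarith [hvmM.2]⟩
    have h3 : ψ w = φ w := hψeq w ⟨by linarith [hwmM.1], by linarith [hwmM.2]⟩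
    have : D ψ = (v - u) * (φ w - (a * w + b)) := by
      rw [hDdef]; simp only [h1, h2, h3, hφu, hφv]; ring
    rw [this]
    exact mul_ne_zero hvu (sub_ne_zero.mpr hφw)
  have hDconv : Tendsto (fun n => D (Ψn n)) atTop (𝓝 (D ψ)) := by
    simp only [hDdef]
    exact (((hΨnconv w).sub (hΨnconv u)).mul tendsto_const_nhds).sub
      (((hΨnconv v).sub (hΨnconv u)).mul tendsto_const_nhds)
  obtain ⟨n, hn1, hDn⟩ := ((eventually_ge_atTop 1).and
    (hDconv.eventually_ne hDψ)).exists
  set ρ := ρn n with hρdef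
  set Ψ : ℝ → ℝ := Ψn n with hΨdef
  have hρOut : ρ.rOut ≤ η / 2 := by
    show η / (n + 1) ≤ η / 2
    apply div_le_div_of_nonneg_left (le_of_lt hη) (by norm_num)
    have : (1 : ℝ) ≤ (n : ℝ) := by exact_mod_cast hn1
    linarith
  have hΨsmooth : ContDiff ℝ ((⊤ : ℕ∞) : WithTop ℕ∞) Ψ :=
    HasCompactSupport.contDiff_convolution_left _ ρ.hasCompactSupport_normed
      ρ.contDiff_normed hψcont.locallyIntegrable
  -- ## Step 5: a point p with nonzero second derivative
  have hp : ∃ p ∈ Icc m M, deriv (deriv Ψ) p ≠ 0 := by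
    by_contra hcon
    push_neg at hcon
    have haff := aux_affine hΨsmooth hcon
    apply hDn
    rw [hDdef]
    simp only []
    rw [haff u humM, haff v hvmM, haff w hwmM]
    ring
  obtain ⟨p, hpmM, hc₂ne⟩ := hp
  set c₂ : ℝ := deriv (deriv Ψ) p with hc₂def
  -- ## Step 6: key composition lemma
  have key : ∀ f : C(X, ℝ), f ∈ F → (∀ x : X, |f x| ≤ η / 2) →
      ∃ h ∈ G, ∀ x : X, h x = Ψ (p + f x) := by
    intro f hfF hfb
    set wfun : ℝ → C(X, ℝ) := fun s =>
      ρ.normed volume s • (ψcm.comp ((p - s) • (1 : C(X, ℝ)) + f)) with hwfundef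
    have hrange : ∀ s : ℝ, |s| ≤ η / 2 → ∀ x : X,
        ((p - s) • (1 : C(X, ℝ)) + f) x ∈ Icc (m - η) (M + η) := by
      intro s hs x
      simp only [ContinuousMap.add_apply, ContinuousMap.smul_apply,
        ContinuousMap.one_apply, smul_eq_mul, mul_one]
      have h1 := abs_le.mp hs
      have h2 := abs_le.mp (hfb x)
      constructor
      · have := hpmM.1; linarith [h1.1, h1.2, h2.1, h2.2]
      · have := hpmM.2; linarith [h1.1, h1.2, h2.1, h2.2]
    have hmem : ∀ s : ℝ, wfun s ∈ G := by
      intro s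
      by_cases hs : ρ.normed volume s = 0
      · rw [hwfundef]; simp only [hs, zero_smul]; exact G.zero_mem
      · have hsball : s ∈ Metric.ball (0 : ℝ) ρ.rOut := by
          rw [← ρ.support_normed_eq (μ := volume)]
          exact Function.mem_support.mpr hs
        have hs2 : |s| ≤ η / 2 := by
          rw [Metric.mem_ball, Real.dist_eq, sub_zero] at hsball
          linarith [hρOut]
        have hgF : (p - s) • (1 : C(X, ℝ)) + f ∈ F :=
          F.add_mem (F.smul_mem _ hone) hfF
        obtain ⟨hc, hhcF, hhc⟩ := hcomp _ hgF (fun x => hIccU (hrange s hs2 x))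
        have hcomp_eq : ψcm.comp ((p - s) • (1 : C(X, ℝ)) + f) = hc := by
          ext x
          rw [ContinuousMap.comp_apply, hhc x]
          exact hψeq _ (hrange s hs2 x)
        rw [hwfundef]
        exact G.smul_mem _ (by rw [hcomp_eq]; exact F.le_topologicalClosure hhcF)
    have hwcont : Continuous wfun := by
      refine Continuous.smul (f := fun s => ρ.normed volume s) (g := fun s => ψcm.comp ((p - s) • (1 : C(X, ℝ)) + f)) ?_ ?_
      · exact ρ.continuous_normed
      · apply (ContinuousMap.continuous_postcomp ψcm).comp
        exact ((continuous_const.sub continuous_id).smul continuous_const).add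
          continuous_const
    have hwsupp : HasCompactSupport wfun := by
      apply HasCompactSupport.intro (isCompact_closedBall (0 : ℝ) ρ.rOut)
      intro s hs
      have : ρ.normed volume s = 0 := by
        have := ρ.support_normed_eq (μ := volume)
        by_contra hne
        have hsupp := Function.mem_support.mpr hne
        rw [this] at hsupp
        exact hs (Metric.ball_subset_closedBall hsupp)
      rw [hwfundef]; simp [this]
    refine ⟨∫ s, wfun s, integral_mem_closedSubmodule G hGclosed hwcont hwsupp hmem, ?_⟩
    intro x
    have hInt : Integrable wfun volume := hwcont.integrable_of_hasCompactSupport hwsupp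
    have hcc := (ContinuousMap.evalCLM ℝ x).integral_comp_comm hInt
    have heval : (∫ s, wfun s) x = ∫ s, (wfun s) x := by
      have h1 : (∫ s, wfun s) x = (ContinuousMap.evalCLM ℝ x) (∫ s, wfun s) := rfl
      rw [h1, ← hcc]
      rfl
    have hval : ∀ s : ℝ, (wfun s) x = ρ.normed volume s • ψ (p + f x - s) := by
      intro s
      rw [hwfundef]
      simp only [ContinuousMap.smul_apply, ContinuousMap.comp_apply,
        ContinuousMap.add_apply, ContinuousMap.smul_apply, ContinuousMap.one_apply,
        smul_eq_mul, mul_one, hψcmdef, ContinuousMap.coe_mk]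
      congr 2
      ring
    show (∫ s, wfun s) x = Ψ (p + f x)
    rw [heval]
    have h2 : Ψ (p + f x) = ∫ s, ρ.normed volume s • ψ (p + f x - s) := by
      rw [hΨdef, hΨndef]
      simp only []
      rw [convolution_def]
      rfl
    rw [h2]
    exact integral_congr_ae (Eventually.of_forall hval)
  -- ## Step 7: squares of elements of F lie in G
  have sq : ∀ f₀ : C(X, ℝ), f₀ ∈ F → (f₀ * f₀ : C(X, ℝ)) ∈ G := by
    intro f₀ hf₀
    suffices hsuff : (f₀ * f₀ : C(X, ℝ)) ∈ closure (G : Set C(X, ℝ)) by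
      rw [hGclosed.closure_eq] at hsuff; exact hsuff
    rw [Metric.mem_closure_iff]
    intro κ hκ
    set Mf : ℝ := ‖f₀‖ + 1 with hMfdef
    have hMf : 0 < Mf := by positivity
    have hfMf : ∀ x : X, |f₀ x| ≤ Mf := fun x => by
      have := f₀.norm_coe_le_norm x
      simp only [Real.norm_eq_abs] at this
      linarith
    set κ' : ℝ := κ * |c₂| / (8 * Mf ^ 2) with hκ'def
    have hκ' : 0 < κ' := by
      have : 0 < |c₂| := abs_pos.mpr hc₂ne
      positivity
    -- continuity of second derivative at p
    obtain ⟨hd1, hd2, hd2cont⟩ := aux_diff hΨsmooth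
    obtain ⟨δ, hδ, hδball⟩ := Metric.continuousAt_iff.mp (hd2cont.continuousAt (x := p)) κ' hκ'
    set r : ℝ := δ / 2 with hrdef
    have hr : 0 < r := by positivity
    have hbd : ∀ τ ∈ Icc (p - r) (p + r), |deriv (deriv Ψ) τ - c₂| ≤ κ' := by
      intro τ hτ
      have : dist τ p < δ := by
        rw [Real.dist_eq, abs_sub_lt_iff]
        constructor <;> [linarith [hτ.2, hrdef, hδ] ; linarith [hτ.1, hrdef, hδ]]
      have := hδball this
      rw [Real.dist_eq] at this
      exact le_of_lt this
    set ε : ℝ := min (r / Mf) (η / (2 * Mf)) with hεdef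
    have hε : 0 < ε := lt_min (by positivity) (by positivity)
    have hεMf_r : ε * Mf ≤ r := by
      have h1 : ε ≤ r / Mf := min_le_left _ _
      calc ε * Mf ≤ (r / Mf) * Mf := mul_le_mul_of_nonneg_right h1 (le_of_lt hMf)
      _ = r := by field_simp
    have hεMf_η : ε * Mf ≤ η / 2 := by
      have h1 : ε ≤ η / (2 * Mf) := min_le_right _ _
      calc ε * Mf ≤ (η / (2 * Mf)) * Mf := mul_le_mul_of_nonneg_right h1 (le_of_lt hMf)
      _ = η / 2 := by field_simp
    obtain ⟨h, hhG, hh⟩ := key (ε • f₀) (F.smul_mem ε hf₀) (by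
      intro x
      simp only [ContinuousMap.smul_apply, smul_eq_mul, abs_mul, abs_of_pos hε]
      calc ε * |f₀ x| ≤ ε * Mf := mul_le_mul_of_nonneg_left (hfMf x) (le_of_lt hε)
      _ ≤ η / 2 := hεMf_η)
    set g : C(X, ℝ) := (2 / (ε ^ 2 * c₂)) •
      (h - (Ψ p) • (1 : C(X, ℝ)) - (ε * deriv Ψ p) • f₀) with hgdef
    have hgG : g ∈ G :=
      G.smul_mem _ (G.sub_mem (G.sub_mem hhG (G.smul_mem _ (F.le_topologicalClosure hone)))
        (G.smul_mem _ (F.le_topologicalClosure hf₀)))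
    refine ⟨g, hgG, ?_⟩
    rw [dist_eq_norm]
    have hbound : ‖f₀ * f₀ - g‖ ≤ κ / 2 := by
      rw [ContinuousMap.norm_le _ (by positivity)]
      intro x
      set t : ℝ := ε * f₀ x with htdef
      have hta : |t| ≤ r := by
        rw [htdef, abs_mul, abs_of_pos hε]
        calc ε * |f₀ x| ≤ ε * Mf := mul_le_mul_of_nonneg_left (hfMf x) (le_of_lt hε)
        _ ≤ r := hεMf_r
      have hT := aux_taylor hΨsmooth p (le_of_lt hκ') hbd t hta
      have hgx : g x = (2 / (ε ^ 2 * c₂)) * (Ψ (p + t) - Ψ p - deriv Ψ p * t) := by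
        rw [hgdef]
        simp only [ContinuousMap.smul_apply, ContinuousMap.sub_apply,
          ContinuousMap.one_apply, smul_eq_mul, mul_one]
        rw [hh x]
        simp only [ContinuousMap.smul_apply, smul_eq_mul]
        rw [htdef]; ring
      have hε2 : ε ^ 2 ≠ 0 := by positivity
      have heq : (f₀ * f₀ - g) x =
          -(2 / (ε ^ 2 * c₂)) * (Ψ (p + t) - Ψ p - deriv Ψ p * t - c₂ / 2 * t ^ 2) := by
        simp only [ContinuousMap.sub_apply, ContinuousMap.mul_apply]
        rw [hgx]
        have ht2 : t ^ 2 = ε ^ 2 * (f₀ x * f₀ x) := by rw [htdef]; ring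
        field_simp
        rw [ht2]
        ring
      rw [Real.norm_eq_abs, heq, abs_mul]
      have habs : |(-(2 / (ε ^ 2 * c₂)))| = 2 / (ε ^ 2 * |c₂|) := by
        rw [abs_neg, abs_div, abs_mul, abs_pow, abs_of_pos hε]
        norm_num
      rw [habs]
      have ht2b : t ^ 2 ≤ ε ^ 2 * Mf ^ 2 := by
        rw [htdef, mul_pow]
        have : (f₀ x) ^ 2 ≤ Mf ^ 2 := by nlinarith [hfMf x, abs_nonneg (f₀ x), sq_abs (f₀ x)]
        nlinarith [sq_nonneg ε]
      have hc₂abs : 0 < |c₂| := abs_pos.mpr hc₂ne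
      calc 2 / (ε ^ 2 * |c₂|) * |Ψ (p + t) - Ψ p - deriv Ψ p * t - c₂ / 2 * t ^ 2|
          ≤ 2 / (ε ^ 2 * |c₂|) * (κ' * t ^ 2) := by
            apply mul_le_mul_of_nonneg_left hT (by positivity)
        _ ≤ 2 / (ε ^ 2 * |c₂|) * (κ' * (ε ^ 2 * Mf ^ 2)) := by
            exact mul_le_mul_of_nonneg_left
              (mul_le_mul_of_nonneg_left ht2b (le_of_lt hκ')) (by positivity)
        _ = κ / 4 := by
            rw [hκ'def]
            field_simp
            ring
        _ ≤ κ / 2 := by linarith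
    calc ‖f₀ * f₀ - g‖ ≤ κ / 2 := hbound
    _ < κ := by linarith
  -- ## Step 8: products
  have hmul : ∀ f ∈ closure (F : Set C(X, ℝ)), ∀ g ∈ closure (F : Set C(X, ℝ)),
      f * g ∈ closure (F : Set C(X, ℝ)) := by
    have hFmul : ∀ a ∈ (F : Set C(X, ℝ)), ∀ b ∈ (F : Set C(X, ℝ)),
        a * b ∈ closure (F : Set C(X, ℝ)) := by
      intro a ha b hb
      rw [← hGset]
      have heq : a * b = (2⁻¹ : ℝ) • ((a + b) * (a + b) - a * a - b * b) := by
        ext x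
        simp only [ContinuousMap.smul_apply, ContinuousMap.sub_apply,
          ContinuousMap.mul_apply, ContinuousMap.add_apply, smul_eq_mul]
        ring
      rw [heq]
      exact G.smul_mem _ (G.sub_mem (G.sub_mem (sq _ (F.add_mem ha hb)) (sq _ ha)) (sq _ hb))
    intro f hf g hg
    have := map_mem_closure₂ (u := closure (F : Set C(X, ℝ))) continuous_mul hf hg hFmul
    simpa [closure_closure] using this
  -- ## Step 9: subalgebra
  set A : Subalgebra ℝ C(X, ℝ) := Submodule.toSubalgebra G (F.le_topologicalClosure hone)
    (fun x y hx hy => by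
      have := hmul x (by rw [← hGset]; exact hx) y (by rw [← hGset]; exact hy)
      rw [← hGset] at this
      exact this) with hAdef
  have hAG : ∀ x : C(X, ℝ), x ∈ A ↔ x ∈ G := fun x => Iff.rfl
  have hAset : (A : Set C(X, ℝ)) = (G : Set C(X, ℝ)) := rfl
  have hAclosed : IsClosed (A : Set C(X, ℝ)) := by rw [hAset]; exact hGclosed
  -- ## Step 10: sups
  have hsup : ∀ f ∈ closure (F : Set C(X, ℝ)), ∀ g ∈ closure (F : Set C(X, ℝ)),
      f ⊔ g ∈ closure (F : Set C(X, ℝ)) := by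
    intro f hf g hg
    rw [← hGset] at hf hg ⊢
    exact ContinuousMap.sup_mem_closed_subalgebra A hAclosed ⟨f, hf⟩ ⟨g, hg⟩
  refine ⟨⟨hmul, hsup⟩, ?_⟩
  -- ## Step 11: density
  intro hsep
  have hsepA : A.SeparatesPoints := by
    intro x y hxy
    obtain ⟨f, hfF, hfne⟩ := hsep x y hxy
    exact ⟨_, ⟨f, F.le_topologicalClosure hfF, rfl⟩, hfne⟩
  have htop := ContinuousMap.subalgebra_topologicalClosure_eq_top_of_separatesPoints A hsepA
  have hAtc : (A.topologicalClosure : Set C(X, ℝ)) = closure (A : Set C(X, ℝ)) :=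
    rfl
  rw [dense_iff_closure_eq]
  have h1 : closure (F : Set C(X, ℝ)) = (A : Set C(X, ℝ)) := by rw [hAset, hGset]
  rw [h1, ← hAclosed.closure_eq, ← hAtc, htop]
  rfl
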